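/- Let E be a 2-uniformly smooth real Banach space, i.e., ρ_E(τ) ≤ K·τ² for all τ > 0 for some K > 0. Then the normalized duality mapping J: E → E* is Lipschitz continuous: there exists a constant M (one may take M = 16K) such that ‖Jx − Jy‖ ≤ M‖x − y‖ for all x, y ∈ E. -/

import Mathlib

open Set

/-- Modulus of smoothness of a normed space `E`. -/
noncomputable def smoothnessModulus (E : Type*) [NormedAddCommGroup E] [NormedSpace ℝ E]
    (τ : ℝ) : ℝ :=
  sSup {t : ℝ | ∃ x y : E, ‖x‖ ≤ 1 ∧ ‖y‖ ≤ 1 ∧ t = (‖x + τ • y‖ + ‖x - τ • y‖) / 2 - 1}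

section Aux

variable {E : Type*} [NormedAddCommGroup E] [NormedSpace ℝ E]

/-- The modulus of smoothness dominates each element of the defining set. -/
lemma sm_ge (τ : ℝ) (hτ : 0 < τ) (x y : E) (hx : ‖x‖ ≤ 1) (hy : ‖y‖ ≤ 1) :
    (‖x + τ • y‖ + ‖x - τ • y‖) / 2 - 1 ≤ smoothnessModulus E τ := by
  apply le_csSup
  · refine ⟨τ, ?_⟩
    rintro t ⟨a, b, ha, hb, rfl⟩
    have hb' : ‖τ • b‖ ≤ τ := by
      rw [norm_smul, Real.norm_eq_abs, abs_of_pos hτ]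
      nlinarith [norm_nonneg b]
    have h1 : ‖a + τ • b‖ ≤ 1 + τ := (norm_add_le _ _).trans (by linarith)
    have h2 : ‖a - τ • b‖ ≤ 1 + τ := (norm_sub_le _ _).trans (by linarith)
    linarith
  · exact ⟨x, y, hx, hy, rfl⟩

/-- In a 2-uniformly smooth space, norming functionals compare (hence are unique). -/
lemma norming_le (K : ℝ) (hK : 0 < K)
    (hρ : ∀ τ > (0:ℝ), smoothnessModulus E τ ≤ K * τ ^ 2)
    (u : E) (hu : ‖u‖ = 1) (f g : E →L[ℝ] ℝ)
    (hf1 : f u = 1) (hfn : ‖f‖ ≤ 1) (hg1 : g u = 1) (hgn : ‖g‖ ≤ 1)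
    (z : E) : f z ≤ g z := by
  have step1 : ∀ w : E, ‖w‖ ≤ 1 → ∀ τ : ℝ, 0 < τ → f w - g w ≤ 2 * K * τ := by
    intro w hw τ hτ
    have h1 : f (u + τ • w) ≤ ‖u + τ • w‖ := by
      have h := f.le_opNorm (u + τ • w)
      have h' : f (u + τ • w) ≤ ‖f (u + τ • w)‖ := by
        rw [Real.norm_eq_abs]; exact le_abs_self _
      nlinarith [norm_nonneg (u + τ • w)]
    have h2 : g (u - τ • w) ≤ ‖u - τ • w‖ := by
      have h := g.le_opNorm (u - τ • w)
      have h' : g (u - τ • w) ≤ ‖g (u - τ • w)‖ := by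
        rw [Real.norm_eq_abs]; exact le_abs_self _
      nlinarith [norm_nonneg (u - τ • w)]
    have hf2 : f (u + τ • w) = 1 + τ * f w := by
      rw [map_add, map_smul, hf1, smul_eq_mul]
    have hg2 : g (u - τ • w) = 1 - τ * g w := by
      rw [map_sub, map_smul, hg1, smul_eq_mul]
    have hsm := sm_ge τ hτ u w hu.le hw
    have hρτ := hρ τ hτ
    rw [hf2] at h1
    rw [hg2] at h2
    -- τ * (f w - g w) ≤ 2 K τ², divide by τ
    nlinarith [hτ]
  have step2 : ∀ w : E, ‖w‖ ≤ 1 → f w ≤ g w := by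
    intro w hw
    by_contra hcon
    push_neg at hcon
    have hpos : 0 < f w - g w := by linarith
    have h1 := step1 w hw ((f w - g w) / (4 * K)) (by positivity)
    have h2 : 2 * K * ((f w - g w) / (4 * K)) = (f w - g w) / 2 := by
      field_simp
      ring
    rw [h2] at h1
    linarith
  rcases eq_or_ne z 0 with rfl | hz
  · simp
  · have hz0 : 0 < ‖z‖ := norm_pos_iff.mpr hz
    have hw : ‖(‖z‖⁻¹ • z)‖ ≤ 1 := le_of_eq (norm_smul_inv_norm hz)
    have h := step2 (‖z‖⁻¹ • z) hw
    have hfz : f (‖z‖⁻¹ • z) = ‖z‖⁻¹ * f z := by rw [map_smul, smul_eq_mul]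
    have hgz : g (‖z‖⁻¹ • z) = ‖z‖⁻¹ * g z := by rw [map_smul, smul_eq_mul]
    rw [hfz, hgz] at h
    have hinv : 0 < ‖z‖⁻¹ := by positivity
    nlinarith

lemma unique_norming (K : ℝ) (hK : 0 < K)
    (hρ : ∀ τ > (0:ℝ), smoothnessModulus E τ ≤ K * τ ^ 2)
    (u : E) (hu : ‖u‖ = 1) (f g : E →L[ℝ] ℝ)
    (hf1 : f u = 1) (hfn : ‖f‖ ≤ 1) (hg1 : g u = 1) (hgn : ‖g‖ ≤ 1) :
    f = g := by
  ext z
  exact le_antisymm (norming_le K hK hρ u hu f g hf1 hfn hg1 hgn z)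
    (norming_le K hK hρ u hu g f hg1 hgn hf1 hfn z)

/-- Second-order upper bound for the norm around a unit vector. -/
lemma upper_bound (J : E → (E →L[ℝ] ℝ))
    (hJ : ∀ x : E, J x x = ‖x‖ ^ 2) (hJn : ∀ x : E, ‖J x‖ = ‖x‖)
    (K : ℝ) (hK : 0 < K)
    (hρ : ∀ τ > (0:ℝ), smoothnessModulus E τ ≤ K * τ ^ 2)
    (v : E) (hv : ‖v‖ = 1) (h : E) (hh : h ≠ 0) :
    ‖v + h‖ ≤ 1 + (J v) h + 2 * K * ‖h‖ ^ 2 := by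
  have hτ : 0 < ‖h‖ := norm_pos_iff.mpr hh
  have hw : ‖(‖h‖⁻¹ • h)‖ ≤ 1 := le_of_eq (norm_smul_inv_norm hh)
  have hsm := sm_ge ‖h‖ hτ v (‖h‖⁻¹ • h) hv.le hw
  rw [smul_inv_smul₀ hτ.ne'] at hsm
  have hρh := hρ ‖h‖ hτ
  have hlow : 1 - (J v) h ≤ ‖v - h‖ := by
    have h1 : (J v) (v - h) ≤ ‖v - h‖ := by
      have h2 := (J v).le_opNorm (v - h)
      rw [hJn v, hv, one_mul] at h2
      have h3 : (J v) (v - h) ≤ ‖(J v) (v - h)‖ := by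
        rw [Real.norm_eq_abs]; exact le_abs_self _
      linarith
    have h4 : (J v) (v - h) = 1 - (J v) h := by
      rw [map_sub, hJ v, hv]; norm_num
    linarith
  linarith

/-- Lipschitz continuity of `J` on the unit sphere, with constant `4K`. -/
lemma unit_lip (J : E → (E →L[ℝ] ℝ))
    (hJ : ∀ x : E, J x x = ‖x‖ ^ 2) (hJn : ∀ x : E, ‖J x‖ = ‖x‖)
    (K : ℝ) (hK : 0 < K)
    (hρ : ∀ τ > (0:ℝ), smoothnessModulus E τ ≤ K * τ ^ 2)
    (u v : E) (hu : ‖u‖ = 1) (hv : ‖v‖ = 1) :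
    ‖J u - J v‖ ≤ 4 * K * ‖u - v‖ := by
  rcases eq_or_ne u v with rfl | huv
  · simp
  have hδ0 : 0 < ‖u - v‖ := by rwa [norm_pos_iff, sub_ne_zero]
  set δ := ‖u - v‖ with hδ
  -- ε = 1 - Jv(u) ≤ 2Kδ²
  have hε : 1 - (J v) u ≤ 2 * K * δ ^ 2 := by
    have hub := upper_bound J hJ hJn K hK hρ v hv (u - v) (sub_ne_zero.mpr huv)
    have h2 : (J v) (u - v) = (J v) u - 1 := by
      rw [map_sub, hJ v, hv]; norm_num
    have h3 : v + (u - v) = u := by abel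
    rw [h3, hu, h2] at hub
    linarith
  have core : ∀ w : E, ‖w‖ ≤ 1 → (J u) w - (J v) w ≤ 4 * K * δ := by
    intro w hw
    have h1 : (J u) (u + δ • w) ≤ ‖u + δ • w‖ := by
      have h := (J u).le_opNorm (u + δ • w)
      rw [hJn u, hu, one_mul] at h
      have h' : (J u) (u + δ • w) ≤ ‖(J u) (u + δ • w)‖ := by
        rw [Real.norm_eq_abs]; exact le_abs_self _
      linarith
    have h2 : (J v) (u - δ • w) ≤ ‖u - δ • w‖ := by
      have h := (J v).le_opNorm (u - δ • w)
      rw [hJn v, hv, one_mul] at h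
      have h' : (J v) (u - δ • w) ≤ ‖(J v) (u - δ • w)‖ := by
        rw [Real.norm_eq_abs]; exact le_abs_self _
      linarith
    have hf2 : (J u) (u + δ • w) = 1 + δ * (J u) w := by
      rw [map_add, map_smul, hJ u, hu, smul_eq_mul]; norm_num
    have hg2 : (J v) (u - δ • w) = (J v) u - δ * (J v) w := by
      rw [map_sub, map_smul, smul_eq_mul]
    have hsm := sm_ge δ hδ0 u w hu.le hw
    have hρδ := hρ δ hδ0
    rw [hf2] at h1
    rw [hg2] at h2
    -- δ * ((J u) w - (J v) w) ≤ 2Kδ² + ε ≤ 4Kδ²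
    nlinarith [hδ0]
  apply ContinuousLinearMap.opNorm_le_bound _ (by positivity)
  intro z
  rcases eq_or_ne z 0 with rfl | hz
  · simp
  · have hz0 : 0 < ‖z‖ := norm_pos_iff.mpr hz
    have hw : ‖(‖z‖⁻¹ • z)‖ ≤ 1 := le_of_eq (norm_smul_inv_norm hz)
    have hplus := core (‖z‖⁻¹ • z) hw
    have hminus := core (-(‖z‖⁻¹ • z)) (by rwa [norm_neg])
    rw [map_neg, map_neg] at hminus
    have habs : |(J u) (‖z‖⁻¹ • z) - (J v) (‖z‖⁻¹ • z)| ≤ 4 * K * δ :=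
      abs_le.mpr ⟨by linarith, hplus⟩
    rw [ContinuousLinearMap.sub_apply, Real.norm_eq_abs]
    have e1 : (J u) (‖z‖⁻¹ • z) = ‖z‖⁻¹ * (J u) z := by rw [map_smul, smul_eq_mul]
    have e2 : (J v) (‖z‖⁻¹ • z) = ‖z‖⁻¹ * (J v) z := by rw [map_smul, smul_eq_mul]
    rw [e1, e2, ← mul_sub, abs_mul,
      abs_of_pos (by positivity : (0:ℝ) < ‖z‖⁻¹)] at habs
    calc |(J u) z - (J v) z|
        = ‖z‖ * (‖z‖⁻¹ * |(J u) z - (J v) z|) := by field_simp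
    _ ≤ ‖z‖ * (4 * K * δ) := mul_le_mul_of_nonneg_left habs hz0.le
    _ = 4 * K * δ * ‖z‖ := by ring

/-- Positive homogeneity of `J`, from uniqueness of norming functionals. -/
lemma homog (J : E → (E →L[ℝ] ℝ))
    (hJ : ∀ x : E, J x x = ‖x‖ ^ 2) (hJn : ∀ x : E, ‖J x‖ = ‖x‖)
    (K : ℝ) (hK : 0 < K)
    (hρ : ∀ τ > (0:ℝ), smoothnessModulus E τ ≤ K * τ ^ 2)
    (a : E) (ha : a ≠ 0) :
    J a = ‖a‖ • J (‖a‖⁻¹ • a) := by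
  have hna : 0 < ‖a‖ := norm_pos_iff.mpr ha
  have hu1 : ‖(‖a‖⁻¹ • a)‖ = 1 := norm_smul_inv_norm ha
  have hf1 : (‖a‖⁻¹ • J a) (‖a‖⁻¹ • a) = 1 := by
    rw [ContinuousLinearMap.smul_apply, map_smul, hJ a, smul_eq_mul, smul_eq_mul]
    rw [sq]
    field_simp
  have hfn : ‖(‖a‖⁻¹ • J a)‖ ≤ 1 := by
    have h := norm_smul (‖a‖⁻¹) (J a)
    rw [Real.norm_eq_abs, abs_of_pos (by positivity : (0:ℝ) < ‖a‖⁻¹), hJn a] at h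
    rw [h, inv_mul_cancel₀ hna.ne']
  have hg1 : (J (‖a‖⁻¹ • a)) (‖a‖⁻¹ • a) = 1 := by
    rw [hJ (‖a‖⁻¹ • a), hu1]; norm_num
  have hgn : ‖J (‖a‖⁻¹ • a)‖ ≤ 1 := le_of_eq (by rw [hJn, hu1])
  have heq := unique_norming K hK hρ (‖a‖⁻¹ • a) hu1 (‖a‖⁻¹ • J a) (J (‖a‖⁻¹ • a))
    hf1 hfn hg1 hgn
  calc J a = ‖a‖ • (‖a‖⁻¹ • J a) := (smul_inv_smul₀ hna.ne' _).symm
  _ = ‖a‖ • J (‖a‖⁻¹ • a) := by rw [heq]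

/-- Main estimate for nonzero vectors `a`, `b` with `‖b‖ ≤ ‖a‖`. -/
lemma key (J : E → (E →L[ℝ] ℝ))
    (hJ : ∀ x : E, J x x = ‖x‖ ^ 2) (hJn : ∀ x : E, ‖J x‖ = ‖x‖)
    (K : ℝ) (hK : 0 < K)
    (hρ : ∀ τ > (0:ℝ), smoothnessModulus E τ ≤ K * τ ^ 2)
    (hK4 : 1 ≤ 4 * K)
    (a b : E) (ha : a ≠ 0) (hb : b ≠ 0) (hab : ‖b‖ ≤ ‖a‖) :
    ‖J a - J b‖ ≤ 16 * K * ‖a - b‖ := by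
  have hna : 0 < ‖a‖ := norm_pos_iff.mpr ha
  have hnb : 0 < ‖b‖ := norm_pos_iff.mpr hb
  set u := ‖a‖⁻¹ • a with hudef
  set v := ‖b‖⁻¹ • b with hvdef
  have hu1 : ‖u‖ = 1 := norm_smul_inv_norm ha
  have hv1 : ‖v‖ = 1 := norm_smul_inv_norm hb
  have hJa : J a = ‖a‖ • J u := homog J hJ hJn K hK hρ a ha
  have hJb : J b = ‖b‖ • J v := homog J hJ hJn K hK hρ b hb
  have hdecomp : J a - J b = ‖b‖ • (J u - J v) + (‖a‖ - ‖b‖) • J u := by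
    rw [hJa, hJb]; module
  have hnorm1 : ‖J u‖ = 1 := by rw [hJn, hu1]
  have hlip := unit_lip J hJ hJn K hK hρ u v hu1 hv1
  have hbuv : ‖b‖ * ‖u - v‖ ≤ ‖a - b‖ + (‖a‖ - ‖b‖) := by
    have h1 : ‖b‖ • u - ‖b‖ • v = (‖b‖ * ‖a‖⁻¹) • a - b := by
      rw [hudef, hvdef, smul_smul, smul_smul]
      rw [mul_inv_cancel₀ hnb.ne', one_smul]
    have h2 : (‖b‖ * ‖a‖⁻¹) • a - b = ((‖b‖ * ‖a‖⁻¹) • a - a) + (a - b) := by abel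
    have h3 : ‖(‖b‖ * ‖a‖⁻¹) • a - a‖ = ‖a‖ - ‖b‖ := by
      have : (‖b‖ * ‖a‖⁻¹) • a - a = (‖b‖ * ‖a‖⁻¹ - 1) • a := by
        rw [sub_smul, one_smul]
      rw [this, norm_smul, Real.norm_eq_abs]
      have hle : ‖b‖ * ‖a‖⁻¹ - 1 ≤ 0 := by
        rw [sub_nonpos]
        rw [mul_inv_le_iff₀ hna, one_mul]
        exact hab
      rw [abs_of_nonpos hle]
      field_simp
      ring
    calc ‖b‖ * ‖u - v‖ = ‖‖b‖ • u - ‖b‖ • v‖ := by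
          rw [← smul_sub, norm_smul, Real.norm_eq_abs, abs_of_pos hnb]
    _ = ‖((‖b‖ * ‖a‖⁻¹) • a - a) + (a - b)‖ := by rw [h1, h2]
    _ ≤ ‖(‖b‖ * ‖a‖⁻¹) • a - a‖ + ‖a - b‖ := norm_add_le _ _
    _ = ‖a - b‖ + (‖a‖ - ‖b‖) := by rw [h3]; ring
  have hRr : ‖a‖ - ‖b‖ ≤ ‖a - b‖ := by
    have := norm_sub_norm_le a b
    linarith
  have hd0 : 0 ≤ ‖a - b‖ := norm_nonneg _
  have hn1 : ‖‖b‖ • (J u - J v)‖ = ‖b‖ * ‖J u - J v‖ := by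
    rw [norm_smul ‖b‖ (J u - J v), Real.norm_eq_abs, abs_of_pos hnb]
  have hn2 : ‖(‖a‖ - ‖b‖) • J u‖ = (‖a‖ - ‖b‖) * 1 := by
    rw [norm_smul (‖a‖ - ‖b‖) (J u), Real.norm_eq_abs,
      abs_of_nonneg (by linarith : (0:ℝ) ≤ ‖a‖ - ‖b‖), hnorm1]
  calc ‖J a - J b‖ ≤ ‖‖b‖ • (J u - J v)‖ + ‖(‖a‖ - ‖b‖) • J u‖ := by
        rw [hdecomp]; exact norm_add_le _ _
  _ = ‖b‖ * ‖J u - J v‖ + (‖a‖ - ‖b‖) * 1 := by rw [hn1, hn2]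
  _ ≤ 16 * K * ‖a - b‖ := by nlinarith [norm_nonneg (u - v), hnb]

end Aux

theorem stmt7 {E : Type*} [NormedAddCommGroup E] [NormedSpace ℝ E] [CompleteSpace E]
    (J : E → (E →L[ℝ] ℝ))
    (hJ : ∀ x : E, J x x = ‖x‖ ^ 2) (hJn : ∀ x : E, ‖J x‖ = ‖x‖)
    (K : ℝ) (hK : 0 < K)
    (hρ : ∀ τ > (0:ℝ), smoothnessModulus E τ ≤ K * τ ^ 2) :
    ∃ M : ℝ, M = 16 * K ∧ ∀ x y : E, ‖J x - J y‖ ≤ M * ‖x - y‖ := by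
  refine ⟨16 * K, rfl, ?_⟩
  intro x y
  rcases eq_or_ne x y with rfl | hxy
  · simp
  · have hsub : x - y ≠ 0 := sub_ne_zero.mpr hxy
    have hd : 0 < ‖x - y‖ := norm_pos_iff.mpr hsub
    have hK4 : 1 ≤ 4 * K := by
      obtain ⟨w, hw1⟩ : ∃ w : E, ‖w‖ = 1 := ⟨_, norm_smul_inv_norm (𝕜 := ℝ) hsub⟩
      have hsm := sm_ge (2:ℝ) two_pos w w hw1.le hw1.le
      have hρ2 := hρ 2 two_pos
      have e1 : ‖w + (2:ℝ) • w‖ = 3 := by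
        rw [show w + (2:ℝ) • w = (3:ℝ) • w from by module, norm_smul (3:ℝ) w, hw1]
        norm_num
      have e2 : ‖w - (2:ℝ) • w‖ = 1 := by
        rw [show w - (2:ℝ) • w = (-1:ℝ) • w from by module, norm_smul (-1:ℝ) w, hw1]
        norm_num
      rw [e1, e2] at hsm
      norm_num at hsm hρ2
      linarith
    have hJ0 : J 0 = 0 := by
      have h := hJn 0
      rw [norm_zero, norm_eq_zero] at h
      exact h
    rcases eq_or_ne x 0 with rfl | hx
    · rcases eq_or_ne y 0 with rfl | hy
      · exact absurd rfl hxy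
      · rw [hJ0, zero_sub, norm_neg, hJn y, zero_sub, norm_neg]
        nlinarith [norm_nonneg y]
    · rcases eq_or_ne y 0 with rfl | hy
      · rw [hJ0, sub_zero, hJn x, sub_zero]
        nlinarith [norm_nonneg x]
      · rcases le_total ‖y‖ ‖x‖ with h | h
        · exact key J hJ hJn K hK hρ hK4 x y hx hy h
        · have hk := key J hJ hJn K hK hρ hK4 y x hy hx h
          rwa [norm_sub_rev (J y), norm_sub_rev y] at hk
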